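/- Let m and n be coprime positive integers and let r be a positive integer. Let F be the set of pairs (S, T) of finite subsets of ℂ such that S and T each have exactly r elements, the product of all elements of S equals 1, the product of all elements of T equals 1, and s^n = t^m for all s ∈ S and t ∈ T. Then F is finite and r · |F| = C(n−1, r−1) · C(m−1, r−1), where C(a, b) denotes the binomial coefficient (equal to 0 when b > a). -/

import Mathlib

open Finset

private lemma countmod (d q v : ℕ) (hd : 0 < d) :
    ((Finset.range (d*q)).filter fun s => s % d = v % d).card = q := by
  induction q with
  | zero => simp
  | succ q ih =>
    have h : d * (q+1) = d*q + d := by ring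
    rw [h, Finset.range_add, Finset.filter_union, Finset.card_union_of_disjoint, ih]
    · congr 1
      rw [Finset.filter_map, Finset.card_map]
      have : (Finset.range d).filter ((fun s => s % d = v % d) ∘ (addLeftEmbedding (d*q))) =
          (Finset.range d).filter (fun j => j = v % d) := by
        apply Finset.filter_congr
        intro j hj
        simp only [Finset.mem_range] at hj
        simp only [Function.comp, addLeftEmbedding_apply]
        have key : (d * q + j) % d = j := by
          rw [Nat.add_mod, Nat.mul_mod_right]; simp [Nat.mod_eq_of_lt hj]
        rw [key]
      rw [this, Finset.filter_eq', if_pos (Finset.mem_range.2 (Nat.mod_lt _ hd)), Finset.card_singleton]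
    · apply Finset.disjoint_filter_filter
      rw [Finset.disjoint_left]
      intro x hx hx2
      simp only [Finset.mem_range] at hx
      simp only [Finset.mem_map, addLeftEmbedding_apply] at hx2
      obtain ⟨j, hj, rfl⟩ := hx2
      omega

private lemma exists_inv {a d : ℕ} (h : Nat.Coprime a d) : ∃ i, a * i ≡ 1 [MOD d] := by
  rcases Nat.lt_or_ge d 2 with hd | hd
  · interval_cases d
    · exact ⟨1, by simp [(Nat.coprime_zero_right a).1 h]⟩
    · exact ⟨0, Nat.modEq_one⟩
  · obtain ⟨i, -, hi⟩ := Nat.exists_mul_mod_eq_one_of_coprime h (by omega)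
    exact ⟨i, by unfold Nat.ModEq; rw [hi, Nat.mod_eq_of_lt hd]⟩

private lemma mul_modeq_mul_left_iff {g x y d : ℕ} (hg : 0 < g) :
    (g * x ≡ g * y [MOD g * d]) ↔ x ≡ y [MOD d] := by
  unfold Nat.ModEq
  rw [Nat.mul_mod_mul_left, Nat.mul_mod_mul_left]
  exact ⟨fun h => Nat.eq_of_mul_eq_mul_left hg h, fun h => by rw [h]⟩

private lemma count_lin (n r c : ℕ) (hn : 0 < n) :
    ((Finset.range n).filter fun s => r * s % n = c % n).card
      = if Nat.gcd r n ∣ c then Nat.gcd r n else 0 := by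
  set g := Nat.gcd r n with hgdef
  have hg : 0 < g := Nat.gcd_pos_of_pos_right _ hn
  have hgn : g ∣ n := Nat.gcd_dvd_right r n
  have hgr : g ∣ r := Nat.gcd_dvd_left r n
  set d := n / g with hddef
  have hnd : n = g * d := (Nat.mul_div_cancel' hgn).symm
  have hd : 0 < d := Nat.div_pos (Nat.le_of_dvd hn hgn) hg
  by_cases hc : g ∣ c
  · rw [if_pos hc]
    set ρ := r / g with hrdef
    have hrr : r = g * ρ := (Nat.mul_div_cancel' hgr).symm
    have hcop : Nat.Coprime ρ d := Nat.coprime_div_gcd_div_gcd hg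
    obtain ⟨i, hi⟩ := exists_inv hcop
    obtain ⟨c', rfl⟩ := hc
    have hcg : g * c' / g = c' := Nat.mul_div_cancel_left c' hg
    set v := i * c' with hvdef
    have key : ∀ s, (r * s % n = (g * c') % n) ↔ s % d = v % d := by
      intro s
      have h1 : (r * s % n = (g * c') % n) ↔ (ρ * s ≡ c' [MOD d]) := by
        have e1 : r * s = g * (ρ * s) := by rw [hrr]; ring
        show (r * s ≡ g * c' [MOD n]) ↔ _
        rw [e1, hnd]
        exact mul_modeq_mul_left_iff hg
      rw [h1]
      constructor
      · intro h
        calc s % d = (1 * s) % d := by rw [one_mul]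
          _ = v % d := by
            have : (1 : ℕ) * s ≡ (ρ * i) * s [MOD d] := (Nat.ModEq.mul_right s hi).symm
            have h2 : (ρ * i) * s = i * (ρ * s) := by ring
            have h3 : i * (ρ * s) ≡ i * c' [MOD d] := Nat.ModEq.mul_left i h
            exact this.trans (h2 ▸ h3)
      · intro h
        have h2 : ρ * s ≡ ρ * v [MOD d] := Nat.ModEq.mul_left ρ h
        have h3 : ρ * v = (ρ * i) * c' := by rw [hvdef]; ring
        have h4 : (ρ * i) * c' ≡ 1 * c' [MOD d] := Nat.ModEq.mul_right _ hi
        rw [one_mul] at h4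
        exact h2.trans (h3 ▸ h4)
    have : (Finset.range n).filter (fun s => r * s % n = (g * c') % n)
        = (Finset.range (d * g)).filter (fun s => s % d = v % d) := by
      rw [show d * g = n by rw [mul_comm, ← hnd]]
      exact Finset.filter_congr (fun s _ => by rw [key s])
    rw [this, countmod d g v hd]
  · rw [if_neg hc]
    rw [Finset.filter_false_of_mem, Finset.card_empty]
    intro s _ hs
    apply hc
    have h1 : g ∣ r * s % n := (Nat.dvd_mod_iff hgn).2 (Dvd.dvd.mul_right hgr s)
    rw [hs] at h1
    exact (Nat.dvd_mod_iff hgn).1 h1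

private lemma dvd_iff_modeq (g a : ℕ) (hg : 0 < g) :
    ∃ α, ∀ j, (g ∣ a + j ↔ j ≡ α [MOD g]) := by
  have ha : a % g < g := Nat.mod_lt _ hg
  refine ⟨(g - a % g) % g, fun j => ?_⟩
  set α := (g - a % g) % g with hα
  have hαg : g ∣ a + α := by
    rcases Nat.eq_zero_or_pos (a % g) with h0 | h0
    · have : α = 0 := by rw [hα, h0, Nat.sub_zero, Nat.mod_self]
      rw [this, Nat.add_zero]
      exact Nat.dvd_of_mod_eq_zero h0
    · have hlt : g - a % g < g := by omega
      have : α = g - a % g := by rw [hα, Nat.mod_eq_of_lt hlt]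
      rw [this]
      have : (a + (g - a % g)) % g = 0 := by
        rw [Nat.add_mod, Nat.mod_eq_of_lt hlt]
        have h2 : a % g + (g - a % g) = g := by omega
        rw [h2, Nat.mod_self]
      exact Nat.dvd_of_mod_eq_zero this
  constructor
  · intro hdvd
    have h1 : a + j ≡ a + α [MOD g] :=
      (Nat.modEq_zero_iff_dvd.2 hdvd).trans (Nat.modEq_zero_iff_dvd.2 hαg).symm
    exact Nat.ModEq.add_left_cancel' a h1
  · intro hmod
    have h1 : a + j ≡ a + α [MOD g] := Nat.ModEq.add_left a hmod
    exact Nat.modEq_zero_iff_dvd.1 (h1.trans (Nat.modEq_zero_iff_dvd.2 hαg))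

private lemma block_sum (g h a b : ℕ) (hg : 0 < g) (hh : 0 < h) (hco : Nat.Coprime g h) :
    ∑ j ∈ Finset.range (g * h),
      (if g ∣ a + j then g else 0) * (if h ∣ b + j then h else 0) = g * h := by
  obtain ⟨α, hA⟩ := dvd_iff_modeq g a hg
  obtain ⟨β, hB⟩ := dvd_iff_modeq h b hh
  obtain ⟨γ, hγ1, hγ2⟩ := Nat.chineseRemainder hco α β
  have hgh : 0 < g * h := Nat.mul_pos hg hh
  set j0 := γ % (g * h) with hj0
  have hj0lt : j0 < g * h := Nat.mod_lt _ hgh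
  have hj0γ : j0 ≡ γ [MOD g * h] := Nat.mod_modEq _ _
  have key : ∀ j, ((g ∣ a + j) ∧ (h ∣ b + j)) ↔ j ≡ γ [MOD g * h] := by
    intro j
    rw [hA, hB]
    constructor
    · rintro ⟨h1, h2⟩
      exact (Nat.modEq_and_modEq_iff_modEq_mul hco).1 ⟨h1.trans hγ1.symm, h2.trans hγ2.symm⟩
    · intro hj
      have := (Nat.modEq_and_modEq_iff_modEq_mul hco).2 hj
      exact ⟨this.1.trans hγ1, this.2.trans hγ2⟩
  have hsum : ∀ j ∈ Finset.range (g * h),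
      (if g ∣ a + j then g else 0) * (if h ∣ b + j then h else 0)
        = if j = j0 then g * h else 0 := by
    intro j hj
    rw [Finset.mem_range] at hj
    by_cases hcond : (g ∣ a + j) ∧ (h ∣ b + j)
    · have hjγ := (key j).1 hcond
      have : j = j0 := by
        have : j ≡ j0 [MOD g * h] := hjγ.trans hj0γ.symm
        have := Nat.ModEq.eq_of_lt_of_lt this hj hj0lt
        exact this
      rw [if_pos hcond.1, if_pos hcond.2, if_pos this]
    · have : ¬ j = j0 := by
        intro hjj
        exact hcond ((key j).2 (hjj ▸ (hj0γ.trans (Nat.ModEq.refl γ))))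
      rw [if_neg this]
      rcases Classical.em (g ∣ a + j) with h1 | h1
      · rcases Classical.em (h ∣ b + j) with h2 | h2
        · exact absurd ⟨h1, h2⟩ hcond
        · rw [if_neg h2, mul_zero]
      · rw [if_neg h1, zero_mul]
  rw [Finset.sum_congr rfl hsum, Finset.sum_ite_eq' (Finset.range (g*h)) j0]
  rw [if_pos (Finset.mem_range.2 hj0lt)]

private lemma range_block (g h : ℕ) (hg : 0 < g) (hh : 0 < h) (hco : Nat.Coprime g h)
    (q : ℕ) : ∀ a b : ℕ,
    ∑ k ∈ Finset.range (g * h * q),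
      (if g ∣ a + k then g else 0) * (if h ∣ b + k then h else 0) = g * h * q := by
  induction q with
  | zero => simp
  | succ q ih =>
    intro a b
    have he : g * h * (q + 1) = g * h * q + g * h := by ring
    rw [he, Finset.range_add, Finset.sum_union]
    · rw [ih a b, Finset.sum_map]
      congr 1
      have : ∀ j ∈ Finset.range (g * h),
          (if g ∣ a + (addLeftEmbedding (g*h*q) j) then g else 0) *
            (if h ∣ b + (addLeftEmbedding (g*h*q) j) then h else 0)
          = (if g ∣ (a + g*h*q) + j then g else 0) * (if h ∣ (b + g*h*q) + j then h else 0) := by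
        intro j _
        simp only [addLeftEmbedding_apply]
        simp only [← Nat.add_assoc]
      rw [Finset.sum_congr rfl this, block_sum g h _ _ hg hh hco]
    · rw [Finset.disjoint_left]
      intro x hx hx2
      simp only [Finset.mem_range] at hx
      simp only [Finset.mem_map, addLeftEmbedding_apply] at hx2
      obtain ⟨j, _, rfl⟩ := hx2
      omega

private lemma sum_range_r (n m r a b : ℕ) (hn : 0 < n) (hm : 0 < m) (hr : 0 < r)
    (hmn : Nat.Coprime m n) :
    ∑ k ∈ Finset.range r,
      (if Nat.gcd r n ∣ a + k then Nat.gcd r n else 0) *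
        (if Nat.gcd r m ∣ b + k then Nat.gcd r m else 0) = r := by
  set g := Nat.gcd r n
  set h := Nat.gcd r m
  have hg : 0 < g := Nat.gcd_pos_of_pos_right _ hn
  have hh : 0 < h := Nat.gcd_pos_of_pos_right _ hm
  have hco : Nat.Coprime g h :=
    Nat.Coprime.coprime_dvd_left (Nat.gcd_dvd_right r n)
      (Nat.Coprime.coprime_dvd_right (Nat.gcd_dvd_right r m) hmn.symm)
  have hghr : g * h ∣ r := Nat.Coprime.mul_dvd_of_dvd_of_dvd hco
    (Nat.gcd_dvd_left r n) (Nat.gcd_dvd_left r m)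
  obtain ⟨q, hq⟩ := hghr
  rw [hq]
  exact range_block g h hg hh hco q a b

private lemma count_zmod (n r : ℕ) [NeZero n] (c : ZMod n) :
    (Finset.univ.filter fun s : ZMod n => (r : ZMod n) * s = c).card
      = if Nat.gcd r n ∣ c.val then Nat.gcd r n else 0 := by
  have hn : 0 < n := Nat.pos_of_ne_zero (NeZero.ne n)
  rw [← count_lin n r c.val hn]
  apply Finset.card_bij (fun (s : ZMod n) _ => s.val)
  · intro s hs
    simp only [Finset.mem_filter, Finset.mem_univ, true_and] at hs
    simp only [Finset.mem_filter, Finset.mem_range]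
    refine ⟨ZMod.val_lt s, ?_⟩
    have : ((r * s.val : ℕ) : ZMod n) = ((c.val : ℕ) : ZMod n) := by
      push_cast
      rw [ZMod.natCast_val, ZMod.cast_id, ZMod.natCast_val, ZMod.cast_id, hs]
    exact (ZMod.natCast_eq_natCast_iff _ _ _).1 this
  · intro s hs t ht hst
    exact ZMod.val_injective n hst
  · intro x hx
    simp only [Finset.mem_filter, Finset.mem_range] at hx
    refine ⟨(x : ZMod n), ?_, ?_⟩
    · simp only [Finset.mem_filter, Finset.mem_univ, true_and]
      have h1 : ((r * x : ℕ) : ZMod n) = ((c.val : ℕ) : ZMod n) :=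
        (ZMod.natCast_eq_natCast_iff _ _ _).2 hx.2
      push_cast at h1
      rw [ZMod.natCast_val, ZMod.cast_id] at h1
      exact h1
    · exact ZMod.val_cast_of_lt hx.1

private lemma shift_sum (n m r : ℕ) [NeZero n] [NeZero m] (hr : 0 < r)
    (hmn : Nat.Coprime m n) (a : ZMod n) (b : ZMod m) :
    ∑ s : ZMod n, ∑ t : ZMod m,
      ((Finset.range r).filter fun k : ℕ =>
        ((k : ZMod n) = a + r * s ∧ (k : ZMod m) = b + r * t)).card = r := by
  have hn : 0 < n := Nat.pos_of_ne_zero (NeZero.ne n)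
  have hm : 0 < m := Nat.pos_of_ne_zero (NeZero.ne m)
  -- rewrite cards as sums of indicators and reorganize
  have step1 : ∀ s : ZMod n, ∀ t : ZMod m,
      ((Finset.range r).filter fun k : ℕ =>
        ((k : ZMod n) = a + r * s ∧ (k : ZMod m) = b + r * t)).card
      = ∑ k ∈ Finset.range r,
          (if (k : ZMod n) = a + r * s then 1 else 0) *
            (if (k : ZMod m) = b + r * t then 1 else 0) := by
    intro s t
    rw [Finset.card_filter]
    apply Finset.sum_congr rfl
    intro k _
    by_cases h1 : (k : ZMod n) = a + r * s <;> by_cases h2 : (k : ZMod m) = b + r * t <;>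
      simp [h1, h2]
  simp only [step1]
  have step2 : ∑ s : ZMod n, ∑ t : ZMod m, ∑ k ∈ Finset.range r,
      (if (k : ZMod n) = a + r * s then 1 else 0) *
        (if (k : ZMod m) = b + r * t then 1 else 0)
      = ∑ k ∈ Finset.range r, (∑ s : ZMod n, if (k : ZMod n) = a + r * s then 1 else 0) *
          (∑ t : ZMod m, if (k : ZMod m) = b + r * t then 1 else 0) := by
    have e1 : ∀ s : ZMod n, ∑ t : ZMod m, ∑ k ∈ Finset.range r,
        (if (k : ZMod n) = a + r * s then 1 else 0) *
          (if (k : ZMod m) = b + r * t then 1 else 0)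
        = ∑ k ∈ Finset.range r, ∑ t : ZMod m,
        (if (k : ZMod n) = a + r * s then 1 else 0) *
          (if (k : ZMod m) = b + r * t then 1 else 0) := fun s => Finset.sum_comm
    simp only [e1]
    rw [Finset.sum_comm]
    apply Finset.sum_congr rfl
    intro k _
    rw [Finset.sum_mul_sum]
  rw [step2]
  -- compute the two inner sums
  have inner1 : ∀ k : ℕ, (∑ s : ZMod n, if (k : ZMod n) = a + r * s then 1 else 0)
      = if Nat.gcd r n ∣ (-a : ZMod n).val + k then Nat.gcd r n else 0 := by
    intro k
    have e : (∑ s : ZMod n, if (k : ZMod n) = a + r * s then 1 else 0)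
        = (Finset.univ.filter fun s : ZMod n => (r : ZMod n) * s = (k : ZMod n) - a).card := by
      rw [Finset.card_filter]
      apply Finset.sum_congr rfl
      intro s _
      congr 1
      apply propext
      constructor
      · intro h; linear_combination -h
      · intro h; linear_combination -h
    rw [e, count_zmod n r]
    congr 1
    have e2 : (k : ZMod n) - a = (((-a : ZMod n).val + k : ℕ) : ZMod n) := by
      push_cast
      rw [ZMod.natCast_val, ZMod.cast_id]
      ring
    rw [e2, ZMod.val_natCast]
    apply propext
    constructor
    · exact fun h => (Nat.dvd_mod_iff (Nat.gcd_dvd_right r n)).1 h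
    · exact fun h => (Nat.dvd_mod_iff (Nat.gcd_dvd_right r n)).2 h
  have inner2 : ∀ k : ℕ, (∑ t : ZMod m, if (k : ZMod m) = b + r * t then 1 else 0)
      = if Nat.gcd r m ∣ (-b : ZMod m).val + k then Nat.gcd r m else 0 := by
    intro k
    have e : (∑ t : ZMod m, if (k : ZMod m) = b + r * t then 1 else 0)
        = (Finset.univ.filter fun t : ZMod m => (r : ZMod m) * t = (k : ZMod m) - b).card := by
      rw [Finset.card_filter]
      apply Finset.sum_congr rfl
      intro t _
      congr 1
      apply propext
      constructor
      · intro h; linear_combination -h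
      · intro h; linear_combination -h
    rw [e, count_zmod m r]
    congr 1
    have e2 : (k : ZMod m) - b = (((-b : ZMod m).val + k : ℕ) : ZMod m) := by
      push_cast
      rw [ZMod.natCast_val, ZMod.cast_id]
      ring
    rw [e2, ZMod.val_natCast]
    apply propext
    constructor
    · exact fun h => (Nat.dvd_mod_iff (Nat.gcd_dvd_right r m)).1 h
    · exact fun h => (Nat.dvd_mod_iff (Nat.gcd_dvd_right r m)).2 h
  simp only [inner1, inner2]
  exact sum_range_r n m r _ _ hn hm hr hmn


private def cnt (n m r : ℕ) (a : ZMod n) (b : ZMod m) : ℕ :=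
  ((Finset.range r).filter fun k : ℕ => ((k : ZMod n) = a ∧ (k : ZMod m) = b)).card

private lemma shift_sum' (n m r : ℕ) [NeZero n] [NeZero m] (hr : 0 < r)
    (hmn : Nat.Coprime m n) (a : ZMod n) (b : ZMod m) :
    ∑ s : ZMod n, ∑ t : ZMod m, cnt n m r (a + r * s) (b + r * t) = r := by
  simp only [cnt]
  exact shift_sum n m r hr hmn a b

private lemma rchoose (n r : ℕ) (hn : 0 < n) (hr : 0 < r) :
    r * Nat.choose n r = n * Nat.choose (n-1) (r-1) := by
  obtain ⟨n', rfl⟩ : ∃ n', n = n' + 1 := ⟨n-1, by omega⟩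
  obtain ⟨r', rfl⟩ : ∃ r', r = r' + 1 := ⟨r-1, by omega⟩
  simpa [Nat.succ_sub_one, mul_comm] using (Nat.add_one_mul_choose_eq n' r').symm

private lemma swap4_gen {α β γ δ : Type*} [Fintype α] [Fintype β] [Fintype γ] [Fintype δ]
    (f : α → β → γ → δ → ℕ) :
    ∑ s : α, ∑ t : β, ∑ X : γ, ∑ Y : δ, f s t X Y
      = ∑ X : γ, ∑ Y : δ, ∑ s : α, ∑ t : β, f s t X Y :=
  calc ∑ s : α, ∑ t : β, ∑ X : γ, ∑ Y : δ, f s t X Y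
      = ∑ s : α, ∑ X : γ, ∑ t : β, ∑ Y : δ, f s t X Y :=
        Finset.sum_congr rfl (fun s _ => Finset.sum_comm)
    _ = ∑ X : γ, ∑ s : α, ∑ t : β, ∑ Y : δ, f s t X Y := Finset.sum_comm
    _ = ∑ X : γ, ∑ s : α, ∑ Y : δ, ∑ t : β, f s t X Y :=
        Finset.sum_congr rfl (fun X _ => Finset.sum_congr rfl (fun s _ => Finset.sum_comm))
    _ = ∑ X : γ, ∑ Y : δ, ∑ s : α, ∑ t : β, f s t X Y :=
        Finset.sum_congr rfl (fun X _ => Finset.sum_comm)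

private lemma main_count (n m r : ℕ) [NeZero n] [NeZero m] (hr : 0 < r)
    (hmn : Nat.Coprime m n) :
    r * ((Finset.range r ×ˢ ((Finset.univ : Finset (Finset (ZMod n))) ×ˢ
        (Finset.univ : Finset (Finset (ZMod m))))).filter
      (fun q : ℕ × Finset (ZMod n) × Finset (ZMod m) =>
        q.2.1.card = r ∧ q.2.2.card = r ∧
        ((q.1 : ZMod n) + ∑ x ∈ q.2.1, x = 0) ∧ ((q.1 : ZMod m) + ∑ y ∈ q.2.2, y = 0))).card
    = Nat.choose (n-1) (r-1) * Nat.choose (m-1) (r-1) := by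
  have hn : 0 < n := Nat.pos_of_ne_zero (NeZero.ne n)
  have hm : 0 < m := Nat.pos_of_ne_zero (NeZero.ne m)
  set MF := (Finset.range r ×ˢ ((Finset.univ : Finset (Finset (ZMod n))) ×ˢ
        (Finset.univ : Finset (Finset (ZMod m))))).filter
      (fun q : ℕ × Finset (ZMod n) × Finset (ZMod m) =>
        q.2.1.card = r ∧ q.2.2.card = r ∧
        ((q.1 : ZMod n) + ∑ x ∈ q.2.1, x = 0) ∧ ((q.1 : ZMod m) + ∑ y ∈ q.2.2, y = 0))
    with hMF
  -- Step i : card as double sum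
  have stepi : MF.card = ∑ X : Finset (ZMod n), ∑ Y : Finset (ZMod m),
      (if X.card = r ∧ Y.card = r
        then cnt n m r (-∑ x ∈ X, x) (-∑ y ∈ Y, y) else 0) := by
    rw [hMF, Finset.card_filter, Finset.sum_product, Finset.sum_comm, Finset.sum_product]
    apply Finset.sum_congr rfl; intro X _
    apply Finset.sum_congr rfl; intro Y _
    by_cases hc : X.card = r ∧ Y.card = r
    · rw [if_pos hc]
      show _ = ((Finset.range r).filter fun k : ℕ =>
        ((k : ZMod n) = -∑ x ∈ X, x ∧ (k : ZMod m) = -∑ y ∈ Y, y)).card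
      rw [Finset.card_filter]
      apply Finset.sum_congr rfl; intro k _
      apply if_congr _ rfl rfl
      constructor
      · rintro ⟨-, -, h1, h2⟩
        exact ⟨eq_neg_of_add_eq_zero_left h1, eq_neg_of_add_eq_zero_left h2⟩
      · rintro ⟨h1, h2⟩
        exact ⟨hc.1, hc.2, by rw [h1]; ring, by rw [h2]; ring⟩
    · rw [if_neg hc]
      apply Finset.sum_eq_zero; intro k _
      rw [if_neg]
      intro hcond
      exact hc ⟨hcond.1, hcond.2.1⟩
  -- Step ii : translation invariance
  have stepii : ∀ (s : ZMod n) (t : ZMod m),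
      MF.card = ∑ X : Finset (ZMod n), ∑ Y : Finset (ZMod m),
        (if X.card = r ∧ Y.card = r
          then cnt n m r (-(∑ x ∈ X, x) - r * s) (-(∑ y ∈ Y, y) - r * t) else 0) := by
    intro s t
    rw [stepi]
    refine Finset.sum_equiv (Equiv.finsetCongr (Equiv.addRight (-s))) (by simp) ?_
    intro X _
    refine Finset.sum_equiv (Equiv.finsetCongr (Equiv.addRight (-t))) (by simp) ?_
    intro Y _
    simp only [Equiv.finsetCongr_apply, Finset.card_map]
    by_cases hc : X.card = r ∧ Y.card = r
    · rw [if_pos hc, if_pos hc]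
      have hX : ∑ x ∈ X.map (Equiv.addRight (-s)).toEmbedding, x
          = (∑ x ∈ X, x) - r • s := by
        rw [Finset.sum_map]
        simp only [Equiv.coe_toEmbedding, Equiv.coe_addRight]
        rw [Finset.sum_add_distrib, Finset.sum_const, hc.1]
        simp [smul_neg, sub_eq_add_neg]
      have hY : ∑ y ∈ Y.map (Equiv.addRight (-t)).toEmbedding, y
          = (∑ y ∈ Y, y) - r • t := by
        rw [Finset.sum_map]
        simp only [Equiv.coe_toEmbedding, Equiv.coe_addRight]
        rw [Finset.sum_add_distrib, Finset.sum_const, hc.2]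
        simp [smul_neg, sub_eq_add_neg]
      rw [hX, hY]
      congr 1 <;> rw [nsmul_eq_mul] <;> ring
    · rw [if_neg hc, if_neg hc]
  -- key inner identity
  have key : ∀ (X : Finset (ZMod n)) (Y : Finset (ZMod m)),
      (∑ s : ZMod n, ∑ t : ZMod m,
        (if X.card = r ∧ Y.card = r
          then cnt n m r (-(∑ x ∈ X, x) - r * s) (-(∑ y ∈ Y, y) - r * t) else 0))
      = if X.card = r ∧ Y.card = r then r else 0 := by
    intro X Y
    by_cases hc : X.card = r ∧ Y.card = r
    · simp only [if_pos hc]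
      have e1 : ∀ s : ZMod n, ∑ t : ZMod m,
          cnt n m r (-(∑ x ∈ X, x) - r * s) (-(∑ y ∈ Y, y) - r * t)
          = ∑ t : ZMod m,
          cnt n m r (-(∑ x ∈ X, x) - r * s) (-(∑ y ∈ Y, y) + r * t) := by
        intro s
        refine Finset.sum_equiv (Equiv.neg (ZMod m)) (by simp) ?_
        intro t _
        simp only [Equiv.neg_apply]
        congr 1
        ring
      simp only [e1]
      have e2 : ∑ s : ZMod n, ∑ t : ZMod m,
          cnt n m r (-(∑ x ∈ X, x) - r * s) (-(∑ y ∈ Y, y) + r * t)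
          = ∑ s : ZMod n, ∑ t : ZMod m,
          cnt n m r (-(∑ x ∈ X, x) + r * s) (-(∑ y ∈ Y, y) + r * t) := by
        refine Finset.sum_equiv (Equiv.neg (ZMod n)) (by simp) ?_
        intro s _
        apply Finset.sum_congr rfl
        intro t _
        simp only [Equiv.neg_apply]
        congr 1
        ring
      rw [e2]
      exact shift_sum' n m r hr hmn _ _
    · simp only [if_neg hc]
      simp
  -- assemble
  have swap4 : ∑ s : ZMod n, ∑ t : ZMod m, ∑ X : Finset (ZMod n), ∑ Y : Finset (ZMod m),
      (if X.card = r ∧ Y.card = r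
          then cnt n m r (-(∑ x ∈ X, x) - r * s) (-(∑ y ∈ Y, y) - r * t) else 0)
      = ∑ X : Finset (ZMod n), ∑ Y : Finset (ZMod m), ∑ s : ZMod n, ∑ t : ZMod m,
      (if X.card = r ∧ Y.card = r
          then cnt n m r (-(∑ x ∈ X, x) - r * s) (-(∑ y ∈ Y, y) - r * t) else 0) := by
    exact swap4_gen _
  have hcards : ((Finset.univ : Finset (Finset (ZMod n))).filter
      (fun X => X.card = r)).card = n.choose r := by
    have : (Finset.univ : Finset (Finset (ZMod n))).filter (fun X => X.card = r)
        = Finset.powersetCard r (Finset.univ : Finset (ZMod n)) := by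
      rw [Finset.powersetCard_eq_filter, Finset.powerset_univ]
    rw [this, Finset.card_powersetCard, Finset.card_univ, ZMod.card]
  have hcards' : ((Finset.univ : Finset (Finset (ZMod m))).filter
      (fun Y => Y.card = r)).card = m.choose r := by
    have : (Finset.univ : Finset (Finset (ZMod m))).filter (fun Y => Y.card = r)
        = Finset.powersetCard r (Finset.univ : Finset (ZMod m)) := by
      rw [Finset.powersetCard_eq_filter, Finset.powerset_univ]
    rw [this, Finset.card_powersetCard, Finset.card_univ, ZMod.card]
  have main : (n * m) * MF.card = (n.choose r * m.choose r) * r := by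
    have lhs1 : ∑ s : ZMod n, ∑ t : ZMod m, MF.card = (n * m) * MF.card := by
      simp [Finset.sum_const, Finset.card_univ, ZMod.card, mul_assoc, mul_comm]
    rw [← lhs1]
    have : ∀ s : ZMod n, ∀ t : ZMod m, MF.card
        = ∑ X : Finset (ZMod n), ∑ Y : Finset (ZMod m),
          (if X.card = r ∧ Y.card = r
            then cnt n m r (-(∑ x ∈ X, x) - r * s) (-(∑ y ∈ Y, y) - r * t) else 0) :=
      fun s t => stepii s t
    calc ∑ s : ZMod n, ∑ t : ZMod m, MF.card
        = ∑ s : ZMod n, ∑ t : ZMod m, ∑ X : Finset (ZMod n), ∑ Y : Finset (ZMod m),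
          (if X.card = r ∧ Y.card = r
            then cnt n m r (-(∑ x ∈ X, x) - r * s) (-(∑ y ∈ Y, y) - r * t) else 0) := by
          apply Finset.sum_congr rfl; intro s _
          apply Finset.sum_congr rfl; intro t _
          exact this s t
      _ = ∑ X : Finset (ZMod n), ∑ Y : Finset (ZMod m), ∑ s : ZMod n, ∑ t : ZMod m,
          (if X.card = r ∧ Y.card = r
            then cnt n m r (-(∑ x ∈ X, x) - r * s) (-(∑ y ∈ Y, y) - r * t) else 0) := swap4
      _ = ∑ X : Finset (ZMod n), ∑ Y : Finset (ZMod m),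
            (if X.card = r ∧ Y.card = r then r else 0) := by
          apply Finset.sum_congr rfl; intro X _
          apply Finset.sum_congr rfl; intro Y _
          exact key X Y
      _ = (n.choose r * m.choose r) * r := by
          have e : ∀ X : Finset (ZMod n), (∑ Y : Finset (ZMod m),
              if X.card = r ∧ Y.card = r then r else 0)
              = if X.card = r then m.choose r * r else 0 := by
            intro X
            by_cases hX : X.card = r
            · rw [if_pos hX]
              simp only [hX, true_and]
              rw [← hcards', ← Finset.sum_filter, Finset.sum_const, smul_eq_mul]
            · rw [if_neg hX]
              apply Finset.sum_eq_zero; intro Y _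
              rw [if_neg]; tauto
          simp only [e]
          rw [← Finset.sum_filter, Finset.sum_const, smul_eq_mul, hcards]
          ring
  -- final arithmetic
  have goal' : (n * m) * (r * MF.card)
      = (n * m) * (Nat.choose (n-1) (r-1) * Nat.choose (m-1) (r-1)) := by
    calc (n * m) * (r * MF.card) = r * ((n * m) * MF.card) := by ring
      _ = r * ((n.choose r * m.choose r) * r) := by rw [main]
      _ = (r * n.choose r) * (r * m.choose r) := by ring
      _ = (n * Nat.choose (n-1) (r-1)) * (m * Nat.choose (m-1) (r-1)) := by
          rw [rchoose n r hn hr, rchoose m r hm hr]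
      _ = (n * m) * (Nat.choose (n-1) (r-1) * Nat.choose (m-1) (r-1)) := by ring
  exact Nat.eq_of_mul_eq_mul_left (Nat.mul_pos hn hm) goal'


private lemma primroot_pow_inj_mod {ζ : ℂ} {N : ℕ} (hN : 0 < N) (h : IsPrimitiveRoot ζ N) (a b : ℕ) :
    ζ ^ a = ζ ^ b ↔ a ≡ b [MOD N] := by
  constructor
  · intro hab
    rcases le_total a b with hle | hle
    · have h1 : ζ ^ a * ζ ^ (b - a) = ζ ^ a * 1 := by
        rw [← pow_add, mul_one, Nat.add_sub_cancel' hle, hab]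
      have hz : ζ ≠ 0 := h.ne_zero hN.ne'
      have h2 : ζ ^ (b - a) = 1 := mul_left_cancel₀ (pow_ne_zero a hz) h1
      have := (h.pow_eq_one_iff_dvd _).1 h2
      exact (Nat.modEq_iff_dvd' hle).2 this
    · have h1 : ζ ^ b * ζ ^ (a - b) = ζ ^ b * 1 := by
        rw [← pow_add, mul_one, Nat.add_sub_cancel' hle, hab]
      have hz : ζ ≠ 0 := h.ne_zero hN.ne'
      have h2 : ζ ^ (a - b) = 1 := mul_left_cancel₀ (pow_ne_zero b hz) h1
      have := (h.pow_eq_one_iff_dvd _).1 h2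
      exact ((Nat.modEq_iff_dvd' hle).2 this).symm
  · intro hab
    conv_lhs => rw [← Nat.div_add_mod a N]
    conv_rhs => rw [← Nat.div_add_mod b N]
    rw [pow_add, pow_add, pow_mul, pow_mul, h.pow_eq_one, one_pow, one_pow, one_mul, one_mul,
      hab]

private lemma dec_inj {ω : ℂ} {r N : ℕ} (hr : 0 < r) (hN : 0 < N)
    (hω : IsPrimitiveRoot ω (r * N)) (k : ℕ) :
    Function.Injective (fun j : ZMod N => ω ^ (k + r * j.val)) := by
  haveI : NeZero N := ⟨hN.ne'⟩
  intro j j' h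
  simp only at h
  have h1 : k + r * j.val ≡ k + r * j'.val [MOD r * N] :=
    (primroot_pow_inj_mod (Nat.mul_pos hr hN) hω _ _).1 h
  have h2 : r * j.val ≡ r * j'.val [MOD r * N] := Nat.ModEq.add_left_cancel' k h1
  have h3 : j.val ≡ j'.val [MOD N] := Nat.ModEq.mul_left_cancel' hr.ne' h2
  apply ZMod.val_injective
  rwa [Nat.ModEq, Nat.mod_eq_of_lt (ZMod.val_lt j), Nat.mod_eq_of_lt (ZMod.val_lt j')] at h3

private lemma dec_prod {ω : ℂ} {r N : ℕ} (hr : 0 < r) (hN : 0 < N)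
    (hω : IsPrimitiveRoot ω (r * N)) (k : ℕ) (X : Finset (ZMod N)) (hX : X.card = r) :
    ((X.image (fun j => ω ^ (k + r * j.val))).prod id = 1)
      ↔ ((k : ZMod N) + ∑ x ∈ X, x = 0) := by
  haveI : NeZero N := ⟨hN.ne'⟩
  rw [Finset.prod_image (fun x _ y _ h => dec_inj hr hN hω k h)]
  simp only [id]
  rw [Finset.prod_pow_eq_pow_sum]
  have hexp : ∑ j ∈ X, (k + r * j.val) = r * (k + ∑ j ∈ X, j.val) := by
    rw [Finset.sum_add_distrib, Finset.sum_const, hX, ← Finset.mul_sum]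
    ring
  rw [hexp, hω.pow_eq_one_iff_dvd, mul_dvd_mul_iff_left hr.ne']
  rw [← ZMod.natCast_eq_zero_iff]
  constructor
  · intro h
    rw [← h]
    push_cast
    congr 1
    rw [Finset.sum_congr rfl (fun j _ => ?_)]
    rw [ZMod.natCast_val, ZMod.cast_id]
  · intro h
    rw [← h]
    push_cast
    congr 1
    rw [Finset.sum_congr rfl (fun j _ => ?_)]
    rw [ZMod.natCast_val, ZMod.cast_id]

private lemma dec_powN {ω : ℂ} {r N : ℕ} (hω : IsPrimitiveRoot ω (r * N)) (k jv : ℕ) :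
    (ω ^ (k + r * jv)) ^ N = (ω ^ N) ^ k := by
  rw [← pow_mul, ← pow_mul]
  rw [show (k + r * jv) * N = N * k + (r * N) * jv by ring, pow_add, pow_mul ω (r*N),
    hω.pow_eq_one, one_pow, mul_one, mul_comm N k]

private lemma exp_pow_eq (r N : ℕ) (hr : r ≠ 0) (hN : N ≠ 0) :
    (Complex.exp (2 * ↑Real.pi * Complex.I / ((r * N : ℕ) : ℂ))) ^ N
      = Complex.exp (2 * ↑Real.pi * Complex.I / (r : ℂ)) := by
  rw [← Complex.exp_nat_mul]
  congr 1
  have h1 : ((r * N : ℕ) : ℂ) = (r : ℂ) * (N : ℂ) := by push_cast; ring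
  rw [h1]
  have hrc : (r : ℂ) ≠ 0 := Nat.cast_ne_zero.2 hr
  have hNc : (N : ℂ) ≠ 0 := Nat.cast_ne_zero.2 hN
  field_simp

set_option maxHeartbeats 1000000 in
private lemma bridge (m n r : ℕ) [NeZero n] [NeZero m] (hr : 0 < r) :
    ({p : Finset ℂ × Finset ℂ | p.1.card = r ∧ p.2.card = r ∧ p.1.prod id = 1 ∧
        p.2.prod id = 1 ∧ ∀ s ∈ p.1, ∀ t ∈ p.2, s ^ n = t ^ m}).Finite ∧
      Nat.card ({p : Finset ℂ × Finset ℂ | p.1.card = r ∧ p.2.card = r ∧ p.1.prod id = 1 ∧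
        p.2.prod id = 1 ∧ ∀ s ∈ p.1, ∀ t ∈ p.2, s ^ n = t ^ m})
        = ((Finset.range r ×ˢ ((Finset.univ : Finset (Finset (ZMod n))) ×ˢ
            (Finset.univ : Finset (Finset (ZMod m))))).filter
          (fun q : ℕ × Finset (ZMod n) × Finset (ZMod m) =>
            q.2.1.card = r ∧ q.2.2.card = r ∧
            ((q.1 : ZMod n) + ∑ x ∈ q.2.1, x = 0) ∧
            ((q.1 : ZMod m) + ∑ y ∈ q.2.2, y = 0))).card := by
  have hn : 0 < n := Nat.pos_of_ne_zero (NeZero.ne n)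
  have hm : 0 < m := Nat.pos_of_ne_zero (NeZero.ne m)
  haveI : NeZero r := ⟨hr.ne'⟩
  set ω : ℂ := Complex.exp (2 * ↑Real.pi * Complex.I / ((r * n : ℕ) : ℂ)) with hωdef
  set ξ : ℂ := Complex.exp (2 * ↑Real.pi * Complex.I / ((r * m : ℕ) : ℂ)) with hξdef
  have hω : IsPrimitiveRoot ω (r * n) :=
    Complex.isPrimitiveRoot_exp _ (Nat.mul_pos hr hn).ne'
  have hξ : IsPrimitiveRoot ξ (r * m) :=
    Complex.isPrimitiveRoot_exp _ (Nat.mul_pos hr hm).ne'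
  have hη : IsPrimitiveRoot (Complex.exp (2 * ↑Real.pi * Complex.I / (r : ℂ))) r :=
    Complex.isPrimitiveRoot_exp _ hr.ne'
  set η : ℂ := Complex.exp (2 * ↑Real.pi * Complex.I / (r : ℂ)) with hηdef
  have hωn : ω ^ n = η := exp_pow_eq r n hr.ne' hn.ne'
  have hξm : ξ ^ m = η := exp_pow_eq r m hr.ne' hm.ne'
  classical
  set dec : ℕ × Finset (ZMod n) × Finset (ZMod m) → Finset ℂ × Finset ℂ :=
    fun q => (q.2.1.image (fun j => ω ^ (q.1 + r * j.val)),
              q.2.2.image (fun j => ξ ^ (q.1 + r * j.val))) with hdec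
  set A := ((Finset.range r ×ˢ ((Finset.univ : Finset (Finset (ZMod n))) ×ˢ
            (Finset.univ : Finset (Finset (ZMod m))))).filter
          (fun q : ℕ × Finset (ZMod n) × Finset (ZMod m) =>
            q.2.1.card = r ∧ q.2.2.card = r ∧
            ((q.1 : ZMod n) + ∑ x ∈ q.2.1, x = 0) ∧
            ((q.1 : ZMod m) + ∑ y ∈ q.2.2, y = 0))) with hA
  have hmemA : ∀ q : ℕ × Finset (ZMod n) × Finset (ZMod m), q ∈ A ↔
      (q.1 < r ∧ q.2.1.card = r ∧ q.2.2.card = r ∧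
        ((q.1 : ZMod n) + ∑ x ∈ q.2.1, x = 0) ∧
        ((q.1 : ZMod m) + ∑ y ∈ q.2.2, y = 0)) := by
    intro q
    rw [hA, Finset.mem_filter, Finset.mem_product, Finset.mem_product]
    simp only [Finset.mem_range, Finset.mem_univ, true_and, and_true]
  -- injectivity of dec on A
  have hinj : Set.InjOn dec ↑A := by
    intro q hq q' hq' heq
    rw [Finset.mem_coe, hmemA] at hq hq'
    obtain ⟨hk, hX, hY, -, -⟩ := hq
    obtain ⟨hk', hX', hY', -, -⟩ := hq'
    have heq1 : q.2.1.image (fun j => ω ^ (q.1 + r * j.val))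
        = q'.2.1.image (fun j => ω ^ (q'.1 + r * j.val)) := congrArg Prod.fst heq
    have heq2 : q.2.2.image (fun j => ξ ^ (q.1 + r * j.val))
        = q'.2.2.image (fun j => ξ ^ (q'.1 + r * j.val)) := congrArg Prod.snd heq
    -- first, q.1 = q'.1
    obtain ⟨j1, hj1⟩ := Finset.card_pos.1 (hX ▸ hr)
    have hs : ω ^ (q.1 + r * j1.val) ∈ q'.2.1.image (fun j => ω ^ (q'.1 + r * j.val)) := by
      rw [← heq1]; exact Finset.mem_image_of_mem _ hj1
    obtain ⟨j2, hj2, hj2e⟩ := Finset.mem_image.1 hs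
    have hmod : q'.1 + r * j2.val ≡ q.1 + r * j1.val [MOD r * n] :=
      (primroot_pow_inj_mod (Nat.mul_pos hr hn) hω _ _).1 hj2e
    have hmodr : q'.1 + r * j2.val ≡ q.1 + r * j1.val [MOD r] :=
      hmod.of_dvd (Dvd.intro n rfl)
    have hkk : q.1 = q'.1 := by
      have e1 : (q'.1 + r * j2.val) % r = q'.1 % r := by
        rw [mul_comm r j2.val, Nat.add_mul_mod_self_right]
      have e2 : (q.1 + r * j1.val) % r = q.1 % r := by
        rw [mul_comm r j1.val, Nat.add_mul_mod_self_right]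
      have := hmodr
      unfold Nat.ModEq at this
      rw [e1, e2, Nat.mod_eq_of_lt hk, Nat.mod_eq_of_lt hk'] at this
      exact this.symm
    -- now X = X', Y = Y'
    have hXX : q.2.1 = q'.2.1 := by
      apply Finset.ext
      intro j
      constructor
      · intro hj
        have : ω ^ (q.1 + r * j.val) ∈ q'.2.1.image (fun j => ω ^ (q'.1 + r * j.val)) := by
          rw [← heq1]; exact Finset.mem_image_of_mem _ hj
        obtain ⟨j', hj', hj'e⟩ := Finset.mem_image.1 this
        rw [← hkk] at hj'e
        have := dec_inj hr hn hω q.1 hj'e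
        rwa [← this]
      · intro hj
        have : ω ^ (q'.1 + r * j.val) ∈ q.2.1.image (fun j => ω ^ (q.1 + r * j.val)) := by
          rw [heq1]; exact Finset.mem_image_of_mem _ hj
        obtain ⟨j', hj', hj'e⟩ := Finset.mem_image.1 this
        rw [hkk] at hj'e
        have := dec_inj hr hn hω q'.1 hj'e
        rwa [← this]
    have hYY : q.2.2 = q'.2.2 := by
      apply Finset.ext
      intro j
      constructor
      · intro hj
        have : ξ ^ (q.1 + r * j.val) ∈ q'.2.2.image (fun j => ξ ^ (q'.1 + r * j.val)) := by
          rw [← heq2]; exact Finset.mem_image_of_mem _ hj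
        obtain ⟨j', hj', hj'e⟩ := Finset.mem_image.1 this
        rw [← hkk] at hj'e
        have := dec_inj hr hm hξ q.1 hj'e
        rwa [← this]
      · intro hj
        have : ξ ^ (q'.1 + r * j.val) ∈ q.2.2.image (fun j => ξ ^ (q.1 + r * j.val)) := by
          rw [heq2]; exact Finset.mem_image_of_mem _ hj
        obtain ⟨j', hj', hj'e⟩ := Finset.mem_image.1 this
        rw [hkk] at hj'e
        have := dec_inj hr hm hξ q'.1 hj'e
        rwa [← this]
    exact Prod.ext hkk (Prod.ext hXX hYY)
  -- image of A under dec equals F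
  have himg : ↑(A.image dec) = {p : Finset ℂ × Finset ℂ | p.1.card = r ∧ p.2.card = r ∧
      p.1.prod id = 1 ∧ p.2.prod id = 1 ∧ ∀ s ∈ p.1, ∀ t ∈ p.2, s ^ n = t ^ m} := by
    apply Set.eq_of_subset_of_subset
    · -- forward inclusion
      rintro p hp
      rw [Finset.mem_coe, Finset.mem_image] at hp
      obtain ⟨q, hq, rfl⟩ := hp
      rw [hmemA] at hq
      obtain ⟨hk, hX, hY, hsX, hsY⟩ := hq
      refine ⟨?_, ?_, ?_, ?_, ?_⟩
      · show (q.2.1.image _).card = r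
        rw [Finset.card_image_of_injOn (dec_inj hr hn hω q.1).injOn, hX]
      · show (q.2.2.image _).card = r
        rw [Finset.card_image_of_injOn (dec_inj hr hm hξ q.1).injOn, hY]
      · exact (dec_prod hr hn hω q.1 q.2.1 hX).2 hsX
      · exact (dec_prod hr hm hξ q.1 q.2.2 hY).2 hsY
      · intro s hs t ht
        obtain ⟨j, hj, rfl⟩ := Finset.mem_image.1 hs
        obtain ⟨j', hj', rfl⟩ := Finset.mem_image.1 ht
        rw [dec_powN hω, dec_powN hξ, hωn, hξm]
    · -- reverse inclusion
      rintro ⟨S, T⟩ ⟨hS, hT, hPS, hPT, hpair⟩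
      simp only at hS hT hPS hPT hpair
      obtain ⟨t0, ht0⟩ := Finset.card_pos.1 (hT ▸ hr)
      obtain ⟨s0, hs0⟩ := Finset.card_pos.1 (hS ▸ hr)
      set ϖ : ℂ := t0 ^ m with hϖdef
      have hSϖ : ∀ s ∈ S, s ^ n = ϖ := fun s hs => hpair s hs t0 ht0
      have hTϖ : ∀ t ∈ T, t ^ m = ϖ := fun t ht => (hpair s0 hs0 t ht).symm.trans (hSϖ s0 hs0)
      have hϖr : ϖ ^ r = 1 := by
        have h1 : ϖ ^ r = ∏ s ∈ S, s ^ n := by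
          rw [Finset.prod_congr rfl hSϖ, Finset.prod_const, hS]
        rw [h1, Finset.prod_pow]
        have : ∏ x ∈ S, x = 1 := hPS
        rw [this, one_pow]
      obtain ⟨k, hk, hϖη⟩ := hη.eq_pow_of_pow_eq_one hϖr
      -- representation of elements of S
      have repS : ∀ s ∈ S, ∃ j : ZMod n, ω ^ (k + r * j.val) = s := by
        intro s hs
        have h1 : s ^ (r * n) = 1 := by
          rw [mul_comm, pow_mul, hSϖ s hs, hϖr]
        obtain ⟨a, ha, has⟩ := hω.eq_pow_of_pow_eq_one h1
        have h2 : a * n ≡ k * n [MOD r * n] := by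
          apply (primroot_pow_inj_mod (Nat.mul_pos hr hn) hω _ _).1
          calc ω ^ (a * n) = (ω ^ a) ^ n := pow_mul ω a n
            _ = s ^ n := by rw [has]
            _ = ϖ := hSϖ s hs
            _ = η ^ k := hϖη.symm
            _ = (ω ^ n) ^ k := by rw [hωn]
            _ = ω ^ (n * k) := (pow_mul ω n k).symm
            _ = ω ^ (k * n) := by rw [mul_comm]
        have h3 : a ≡ k [MOD r] := Nat.ModEq.mul_right_cancel' hn.ne' h2
        have h4 : a % r = k := by
          unfold Nat.ModEq at h3
          rw [Nat.mod_eq_of_lt hk] at h3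
          exact h3
        refine ⟨((a / r : ℕ) : ZMod n), ?_⟩
        have hlt : a / r < n := (Nat.div_lt_iff_lt_mul hr).2 (mul_comm r n ▸ ha)
        rw [ZMod.val_cast_of_lt hlt]
        rw [← has]
        congr 1
        rw [← h4, Nat.add_comm]
        exact Nat.div_add_mod a r
      have repT : ∀ t ∈ T, ∃ j : ZMod m, ξ ^ (k + r * j.val) = t := by
        intro t ht
        have h1 : t ^ (r * m) = 1 := by
          rw [mul_comm, pow_mul, hTϖ t ht, hϖr]
        obtain ⟨a, ha, has⟩ := hξ.eq_pow_of_pow_eq_one h1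
        have h2 : a * m ≡ k * m [MOD r * m] := by
          apply (primroot_pow_inj_mod (Nat.mul_pos hr hm) hξ _ _).1
          calc ξ ^ (a * m) = (ξ ^ a) ^ m := pow_mul ξ a m
            _ = t ^ m := by rw [has]
            _ = ϖ := hTϖ t ht
            _ = η ^ k := hϖη.symm
            _ = (ξ ^ m) ^ k := by rw [hξm]
            _ = ξ ^ (m * k) := (pow_mul ξ m k).symm
            _ = ξ ^ (k * m) := by rw [mul_comm]
        have h3 : a ≡ k [MOD r] := Nat.ModEq.mul_right_cancel' hm.ne' h2
        have h4 : a % r = k := by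
          unfold Nat.ModEq at h3
          rw [Nat.mod_eq_of_lt hk] at h3
          exact h3
        refine ⟨((a / r : ℕ) : ZMod m), ?_⟩
        have hlt : a / r < m := (Nat.div_lt_iff_lt_mul hr).2 (mul_comm r m ▸ ha)
        rw [ZMod.val_cast_of_lt hlt]
        rw [← has]
        congr 1
        rw [← h4, Nat.add_comm]
        exact Nat.div_add_mod a r
      set X : Finset (ZMod n) := Finset.univ.filter (fun j => ω ^ (k + r * j.val) ∈ S) with hXdef
      set Y : Finset (ZMod m) := Finset.univ.filter (fun j => ξ ^ (k + r * j.val) ∈ T) with hYdef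
      have himS : X.image (fun j => ω ^ (k + r * j.val)) = S := by
        apply Finset.ext
        intro s
        rw [Finset.mem_image]
        constructor
        · rintro ⟨j, hj, rfl⟩
          rw [hXdef, Finset.mem_filter] at hj
          exact hj.2
        · intro hs
          obtain ⟨j, hj⟩ := repS s hs
          exact ⟨j, by rw [hXdef, Finset.mem_filter]; exact ⟨Finset.mem_univ _, hj ▸ hs⟩, hj⟩
      have himT : Y.image (fun j => ξ ^ (k + r * j.val)) = T := by
        apply Finset.ext
        intro t
        rw [Finset.mem_image]
        constructor
        · rintro ⟨j, hj, rfl⟩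
          rw [hYdef, Finset.mem_filter] at hj
          exact hj.2
        · intro ht
          obtain ⟨j, hj⟩ := repT t ht
          exact ⟨j, by rw [hYdef, Finset.mem_filter]; exact ⟨Finset.mem_univ _, hj ▸ ht⟩, hj⟩
      have hcardX : X.card = r := by
        rw [← Finset.card_image_of_injOn (dec_inj hr hn hω k).injOn, himS, hS]
      have hcardY : Y.card = r := by
        rw [← Finset.card_image_of_injOn (dec_inj hr hm hξ k).injOn, himT, hT]
      have hqA : (k, X, Y) ∈ A := by
        rw [hmemA]
        refine ⟨hk, hcardX, hcardY, ?_, ?_⟩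
        · exact (dec_prod hr hn hω k X hcardX).1 (by rw [himS]; exact hPS)
        · exact (dec_prod hr hm hξ k Y hcardY).1 (by rw [himT]; exact hPT)
      rw [Finset.mem_coe, Finset.mem_image]
      exact ⟨(k, X, Y), hqA, by rw [hdec]; exact Prod.ext himS himT⟩
  constructor
  · rw [← himg]; exact (A.image dec).finite_toSet
  · rw [← himg, Nat.card_coe_set_eq, Set.ncard_coe_finset,
      Finset.card_image_of_injOn hinj]


/-- Let `m` and `n` be coprime positive integers and `r` a positive integer. Let `F` be the
set of pairs `(S, T)` of finite subsets of `ℂ` of cardinality `r`, each with product of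
elements equal to `1`, such that `s^n = t^m` for all `s ∈ S`, `t ∈ T`. Then `F` is finite
and `r · |F| = C(n−1, r−1) · C(m−1, r−1)`. -/
theorem stmt_3 (m n r : ℕ) (hm : 0 < m) (hn : 0 < n) (hr : 0 < r) (hmn : Nat.Coprime m n) :
    letI F : Set (Finset ℂ × Finset ℂ) :=
      {p | p.1.card = r ∧ p.2.card = r ∧ p.1.prod id = 1 ∧ p.2.prod id = 1 ∧
        ∀ s ∈ p.1, ∀ t ∈ p.2, s ^ n = t ^ m}
    F.Finite ∧ r * Nat.card F = Nat.choose (n - 1) (r - 1) * Nat.choose (m - 1) (r - 1) := by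
  haveI : NeZero n := ⟨hn.ne'⟩
  haveI : NeZero m := ⟨hm.ne'⟩
  obtain ⟨hfin, hcard⟩ := bridge m n r hr
  exact ⟨hfin, by rw [hcard]; exact main_count n m r hr hmn⟩
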